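/- For every integer n ≥ 29, one has 2·3^(‖n−1‖/6) < n (in particular n² − 4·3^(‖n−1‖/3) > 0), where the powers of 3 are real powers. -/

import Mathlib

/-- `HasCpx n k` means the positive integer `n` can be written using exactly `k` ones,
additions and multiplications. -/
inductive HasCpx : ℕ → ℕ → Prop
  | one : HasCpx 1 1
  | add {a b j k : ℕ} : HasCpx a j → HasCpx b k → HasCpx (a + b) (j + k)
  | mul {a b j k : ℕ} : HasCpx a j → HasCpx b k → HasCpx (a * b) (j + k)

/-- The integer complexity `‖n‖`: the least number of 1's needed to write `n` using
only `+` and `*`.  By convention (`sInf ∅ = 0` in `ℕ`) we have `cpx 0 = 0`. -/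
noncomputable def cpx (n : ℕ) : ℕ := sInf {k | HasCpx n k}

/-- Every `m ≥ 2` has a representation with `k` ones where `2 ^ k ≤ m ^ 3`
(binary expansion bound). -/
lemma hasCpx_bound : ∀ m : ℕ, 2 ≤ m → ∃ k, HasCpx m k ∧ 2 ^ k ≤ m ^ 3 := by
  intro m
  induction m using Nat.strong_induction_on with
  | _ m ih =>
    intro hm
    rcases Nat.lt_or_ge m 4 with h4 | h4
    · interval_cases m
      · exact ⟨2, HasCpx.add HasCpx.one HasCpx.one, by norm_num⟩
      · exact ⟨3, HasCpx.add (HasCpx.add HasCpx.one HasCpx.one) HasCpx.one, by norm_num⟩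
    · obtain ⟨k, hk, hbk⟩ := ih (m / 2) (by omega) (by omega)
      have h2 : HasCpx 2 2 := HasCpx.add HasCpx.one HasCpx.one
      rcases Nat.even_or_odd m with he | ho
      · obtain ⟨r, hr⟩ := he
        have hm2 : m = 2 * (m / 2) := by omega
        refine ⟨2 + k, ?_, ?_⟩
        · rw [hm2]; exact HasCpx.mul h2 hk
        · have e1 : 2 ^ (2 + k) = 4 * 2 ^ k := by ring
          have e2 : (2 * (m / 2)) ^ 3 = 8 * (m / 2) ^ 3 := by ring
          rw [e1, hm2, e2]
          linarith [Nat.zero_le ((m / 2) ^ 3)]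
      · obtain ⟨r, hr⟩ := ho
        have hm2 : m = 2 * (m / 2) + 1 := by omega
        refine ⟨2 + k + 1, ?_, ?_⟩
        · rw [hm2]; exact HasCpx.add (HasCpx.mul h2 hk) HasCpx.one
        · have e1 : 2 ^ (2 + k + 1) = 8 * 2 ^ k := by ring
          have e2 : (2 * (m / 2) + 1) ^ 3
              = 8 * (m / 2) ^ 3 + 12 * (m / 2) ^ 2 + 6 * (m / 2) + 1 := by ring
          rw [e1, hm2, e2]
          linarith [Nat.zero_le ((m / 2) ^ 2), Nat.zero_le (m / 2)]

/-- For `n ≥ 29`, `2·3^(‖n-1‖/6) < n`; in particular `n² - 4·3^(‖n-1‖/3) > 0`. -/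
theorem two_rpow_lt (n : ℕ) (hn : 29 ≤ n) :
    2 * (3 : ℝ) ^ ((cpx (n - 1) : ℝ) / 6) < n ∧
    0 < (n : ℝ) ^ 2 - 4 * (3 : ℝ) ^ ((cpx (n - 1) : ℝ) / 3) := by
  set m := n - 1 with hmdef
  have hm : 2 ≤ m := by omega
  obtain ⟨k, hk, hbk⟩ := hasCpx_bound m hm
  have hc : cpx m ≤ k := Nat.sInf_le hk
  set c := cpx m with hcdef
  have h2c : 2 ^ c ≤ m ^ 3 := le_trans (Nat.pow_le_pow_right (by norm_num) hc) hbk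
  have key : 2 ^ 102 * 3 ^ (17 * c) < n ^ 102 := by
    have h1 : 3 ^ (17 * c) ≤ (2 ^ c) ^ 27 := by
      calc 3 ^ (17 * c) = (3 ^ 17) ^ c := by rw [pow_mul]
        _ ≤ (2 ^ 27) ^ c := Nat.pow_le_pow_left (by norm_num) c
        _ = (2 ^ c) ^ 27 := by rw [← pow_mul, ← pow_mul, Nat.mul_comm]
    have h2 : (2 ^ c) ^ 27 ≤ m ^ 81 := by
      calc (2 ^ c) ^ 27 ≤ (m ^ 3) ^ 27 := Nat.pow_le_pow_left h2c 27
        _ = m ^ 81 := by rw [← pow_mul]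
    have h3 : 2 ^ 102 < n ^ 21 :=
      lt_of_lt_of_le (by norm_num) (Nat.pow_le_pow_left hn 21)
    calc 2 ^ 102 * 3 ^ (17 * c) ≤ 2 ^ 102 * m ^ 81 :=
          Nat.mul_le_mul_left _ (le_trans h1 h2)
      _ < n ^ 21 * m ^ 81 := (Nat.mul_lt_mul_right (Nat.pow_pos (by omega))).mpr h3
      _ ≤ n ^ 21 * n ^ 81 := Nat.mul_le_mul_left _ (Nat.pow_le_pow_left (by omega) 81)
      _ = n ^ 102 := by rw [← pow_add]
  set x : ℝ := 2 * (3 : ℝ) ^ ((c : ℝ) / 6) with hxdef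
  have hx0 : 0 ≤ x := by positivity
  have hx102 : x ^ 102 = 2 ^ 102 * (3 : ℝ) ^ ((17 * c : ℕ) : ℝ) := by
    rw [hxdef, mul_pow]
    congr 1
    rw [← Real.rpow_natCast ((3:ℝ) ^ ((c:ℝ)/6)) 102, ← Real.rpow_mul (by norm_num)]
    congr 1
    push_cast
    ring
  have hlt : x ^ 102 < (n : ℝ) ^ 102 := by
    rw [hx102, Real.rpow_natCast]
    exact_mod_cast key
  have h1 : x < n := lt_of_pow_lt_pow_left₀ 102 (Nat.cast_nonneg n) hlt
  refine ⟨h1, ?_⟩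
  have hx2 : x ^ 2 = 4 * (3 : ℝ) ^ ((c : ℝ) / 3) := by
    rw [hxdef, mul_pow, ← Real.rpow_natCast ((3:ℝ) ^ ((c:ℝ)/6)) 2,
      ← Real.rpow_mul (by norm_num)]
    norm_num
    rw [show (c:ℝ) / 6 * 2 = (c:ℝ) / 3 by ring]
  have : x ^ 2 < (n : ℝ) ^ 2 := pow_lt_pow_left₀ h1 hx0 (by norm_num)
  rw [hx2] at this
  linarith
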